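/- Let α ∈ ℝ, α ≠ 1, and set β = 2/(1−α). Let X be a compact topological space with a nonzero finite Borel measure λ, let f, ξ : X → ℝ be continuous, let I ⊆ ℝ be an interval containing 0, and let τ : I → ℝ be twice continuously differentiable with τ(0) = 0, τ'(0) = 1, satisfying f(x) + τ(t) ξ(x) > 0 for all (t,x) ∈ I × X and the ODE τ''(t) = 2 · ( ∫_X (f + τ(t)ξ)^{β−1} ξ dλ / ∫_X (f + τ(t)ξ)^{β} dλ ) · τ'(t)². Define γ : I × X → (0,∞) by γ(t,x) = (2/|1−α|) · ( f(x) + τ(t)ξ(x) ) / ( ∫_X (f + τ(t)ξ)^{β} dλ )^{1/β}. Then: (i) ∫_X γ(t,·)^{β} dλ = (2/|1−α|)^{β} for every t ∈ I; and (ii) there exists a function c : I → ℝ such that ∂_t² γ(t,x) = c(t) · γ(t,x) for all (t,x) ∈ I × X. That is, γ is a geodesic of the connection on the constraint surface S_α = { f > 0 : ∫ f^{β} dλ = (2/|1−α|)^{β} } obtained by projecting the trivial connection radially (along the span of the footpoint). -/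

import Mathlib

open MeasureTheory

section aux

open Metric

variable {X : Type*} [TopologicalSpace X] [CompactSpace X]
    [MeasurableSpace X] [BorelSpace X]
    (lam : Measure X) [IsFiniteMeasure lam]

lemma aux_cont_integrable {h : X → ℝ} (hh : Continuous h) : Integrable h lam := by
  obtain ⟨C, hC⟩ := isCompact_univ.exists_bound_of_continuousOn hh.continuousOn
  exact (integrable_const C).mono' hh.aestronglyMeasurable
    (Filter.Eventually.of_forall fun x => hC x (Set.mem_univ x))

lemma aux_integral_pos [Nonempty X] (hlam : lam ≠ 0) {h : X → ℝ} (hh : Continuous h)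
    (hp : ∀ x, 0 < h x) : 0 < ∫ x, h x ∂lam := by
  obtain ⟨x₀, -, hx₀⟩ := isCompact_univ.exists_isMinOn Set.univ_nonempty hh.continuousOn
  have h1 : ∫ _x, (h x₀ : ℝ) ∂lam ≤ ∫ x, h x ∂lam :=
    integral_mono (integrable_const _) (aux_cont_integrable lam hh)
      fun x => hx₀ (Set.mem_univ x)
  have h2 : (0:ℝ) < ∫ _x, (h x₀ : ℝ) ∂lam := by
    rw [integral_const, smul_eq_mul]
    have hpos : 0 < (lam Set.univ).toReal := by
      refine ENNReal.toReal_pos ?_ (measure_ne_top _ _)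
      simpa [Measure.measure_univ_eq_zero] using hlam
    exact mul_pos hpos (hp x₀)
  linarith

lemma aux_openPos [Nonempty X] {f ξ : X → ℝ} (hf : Continuous f) (hξ : Continuous ξ)
    {s₀ : ℝ} (h : ∀ x, 0 < f x + s₀ * ξ x) :
    ∃ ε > 0, ∀ s ∈ closedBall s₀ ε, ∀ x, 0 < f x + s * ξ x := by
  obtain ⟨x₀, -, hx₀⟩ := isCompact_univ.exists_isMinOn Set.univ_nonempty
    ((hf.add (continuous_const.mul hξ)).continuousOn (s := Set.univ))
  set m := f x₀ + s₀ * ξ x₀ with hm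
  have hm0 : 0 < m := h x₀
  obtain ⟨M, hM⟩ := isCompact_univ.exists_bound_of_continuousOn hξ.continuousOn
  have hM0 : 0 ≤ M := le_trans (norm_nonneg _) (hM x₀ (Set.mem_univ x₀))
  refine ⟨m / (2 * (M + 1)), by positivity, fun s hs x => ?_⟩
  have h1 : m ≤ f x + s₀ * ξ x := hx₀ (Set.mem_univ x)
  have h2 : |s - s₀| ≤ m / (2 * (M + 1)) := by
    simpa [Real.dist_eq] using hs
  have h3 : |ξ x| ≤ M := hM x (Set.mem_univ x)
  have h4 : |(s - s₀) * ξ x| ≤ m / (2 * (M + 1)) * M := by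
    rw [abs_mul]
    exact mul_le_mul h2 h3 (abs_nonneg _) (by positivity)
  have h5 : m / (2 * (M + 1)) * M ≤ m / 2 := by
    rw [div_mul_eq_mul_div, div_le_div_iff₀ (by positivity) (by norm_num)]
    nlinarith
  have h6 : -(m/2) ≤ (s - s₀) * ξ x := by
    have := (abs_le.mp (h4.trans h5)).1
    linarith
  have : f x + s * ξ x = (f x + s₀ * ξ x) + (s - s₀) * ξ x := by ring
  rw [this]
  linarith

lemma aux_diff_under [Nonempty X] {f ξ w : X → ℝ} (hf : Continuous f) (hξ : Continuous ξ)
    (hw : Continuous w) (r : ℝ) {s₀ : ℝ} (hs₀ : ∀ x, 0 < f x + s₀ * ξ x) :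
    HasDerivAt (fun s => ∫ x, (f x + s * ξ x) ^ r * w x ∂lam)
      (∫ x, (r * (f x + s₀ * ξ x) ^ (r - 1) * ξ x) * w x ∂lam) s₀ := by
  obtain ⟨ε, hε, hball⟩ := aux_openPos hf hξ hs₀
  have hbase : ∀ s ∈ closedBall s₀ ε, Continuous fun x => f x + s * ξ x :=
    fun s _ => hf.add (continuous_const.mul hξ)
  -- bound on the derivative over the closed ball
  have hKc : IsCompact ((closedBall s₀ ε) ×ˢ (Set.univ : Set X)) :=
    (isCompact_closedBall _ _).prod isCompact_univ
  have hbase2 : Continuous fun p : ℝ × X => f p.2 + p.1 * ξ p.2 :=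
    (hf.comp continuous_snd).add (continuous_fst.mul (hξ.comp continuous_snd))
  have hGcont : ContinuousOn
      (fun p : ℝ × X => (r * (f p.2 + p.1 * ξ p.2) ^ (r - 1) * ξ p.2) * w p.2)
      ((closedBall s₀ ε) ×ˢ Set.univ) := by
    refine ((continuousOn_const.mul (hbase2.continuousOn.rpow_const ?_)).mul
      (hξ.comp continuous_snd).continuousOn).mul (hw.comp continuous_snd).continuousOn
    exact fun p hp => Or.inl (ne_of_gt (hball p.1 hp.1 p.2))
  obtain ⟨C₀, hC₀⟩ := hKc.exists_bound_of_continuousOn hGcont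
  refine (hasDerivAt_integral_of_dominated_loc_of_deriv_le (μ := lam) (x₀ := s₀)
    (F := fun s x => (f x + s * ξ x) ^ r * w x)
    (F' := fun s x => (r * (f x + s * ξ x) ^ (r - 1) * ξ x) * w x)
    (bound := fun _ => C₀) (ball_mem_nhds s₀ hε) ?_ ?_ ?_ ?_ ?_ ?_).2
  · filter_upwards [closedBall_mem_nhds s₀ hε] with s hs
    exact (((hbase s hs).rpow_const fun x =>
      Or.inl (ne_of_gt (hball s hs x))).mul hw).aestronglyMeasurable
  · exact aux_cont_integrable lam
      (((hbase s₀ (mem_closedBall_self hε.le)).rpow_const fun x =>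
        Or.inl (ne_of_gt (hs₀ x))).mul hw)
  · exact ((continuous_const.mul ((hbase s₀ (mem_closedBall_self hε.le)).rpow_const fun x =>
      Or.inl (ne_of_gt (hs₀ x))) |>.mul hξ).mul hw).aestronglyMeasurable
  · refine Filter.Eventually.of_forall fun x s hs => ?_
    exact hC₀ (s, x) ⟨ball_subset_closedBall hs, Set.mem_univ x⟩
  · exact integrable_const _
  · refine Filter.Eventually.of_forall fun x s hs => ?_
    have hb : HasDerivAt (fun s : ℝ => f x + s * ξ x) (ξ x) s := by
      simpa using ((hasDerivAt_id s).mul_const (ξ x)).const_add (f x)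
    have := (hb.rpow_const (p := r) (Or.inl (ne_of_gt
      (hball s (ball_subset_closedBall hs) x)))).mul_const (w x)
    refine this.congr_deriv ?_
    ring

end aux

/-- Geodesics of the radially projected connection on the constraint surface
`S_α = {f > 0 : ∫ f^β dλ = (2/|1−α|)^β}` (`β = 2/(1−α)`, `α ≠ 1`) are radial projections of
straight lines: if `τ` solves the stated scalar ODE with `τ(0) = 0`, `τ'(0) = 1`, then
`γ(t,x) = (2/|1−α|)(f(x)+τ(t)ξ(x)) / (∫ (f+τ(t)ξ)^β dλ)^{1/β}` satisfies
(i) `∫ γ(t,·)^β dλ = (2/|1−α|)^β` for all `t ∈ I`, and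
(ii) `∂_t² γ(t,x) = c(t) γ(t,x)` for some scalar function `c`. -/
theorem stmt18 (α : ℝ) (hα : α ≠ 1) {X : Type*} [TopologicalSpace X] [CompactSpace X]
    [MeasurableSpace X] [BorelSpace X]
    (lam : Measure X) [IsFiniteMeasure lam] (hlam : lam ≠ 0)
    (f ξ : X → ℝ) (hf : Continuous f) (hξ : Continuous ξ) (hfξ : f ≠ ξ)
    (I : Set ℝ) (hIc : I.OrdConnected) (h0 : (0 : ℝ) ∈ I)
    (τ τ' τ'' : ℝ → ℝ)
    (hτ0 : τ 0 = 0) (hτ'0 : τ' 0 = 1)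
    (hd1 : ∀ t ∈ I, HasDerivWithinAt τ (τ' t) I t)
    (hd2 : ∀ t ∈ I, HasDerivWithinAt τ' (τ'' t) I t)
    (hcont : ContinuousOn τ'' I)
    (hpos : ∀ t ∈ I, ∀ x : X, 0 < f x + τ t * ξ x)
    (hode : ∀ t ∈ I,
      τ'' t = 2 * ((∫ x, (f x + τ t * ξ x) ^ (2 / (1 - α) - 1 : ℝ) * ξ x ∂lam)
          / (∫ x, (f x + τ t * ξ x) ^ (2 / (1 - α) : ℝ) ∂lam)) * (τ' t) ^ 2)
    (γ : ℝ → X → ℝ)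
    (hγ : ∀ t x, γ t x = (2 / |1 - α|) * (f x + τ t * ξ x)
        / (∫ x', (f x' + τ t * ξ x') ^ (2 / (1 - α) : ℝ) ∂lam) ^ ((1 - α) / 2 : ℝ)) :
    (∀ t ∈ I, ∫ x, (γ t x) ^ (2 / (1 - α) : ℝ) ∂lam
        = (2 / |1 - α|) ^ (2 / (1 - α) : ℝ)) ∧
    (∃ c : ℝ → ℝ, ∃ γ' : ℝ → X → ℝ,
      (∀ x : X, ∀ t ∈ I, HasDerivWithinAt (fun s => γ s x) (γ' t x) I t) ∧
      (∀ x : X, ∀ t ∈ I, HasDerivWithinAt (fun s => γ' s x) (c t * γ t x) I t)) := by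
  haveI : Nonempty X := by
    by_contra h
    rw [not_nonempty_iff] at h
    exact hlam (Measure.eq_zero_of_isEmpty lam)
  have h1α : (1 : ℝ) - α ≠ 0 := sub_ne_zero.mpr (Ne.symm hα)
  have habs : (0 : ℝ) < |1 - α| := abs_pos.mpr h1α
  set b : ℝ := 2 / (1 - α) with hbdef
  set Cst : ℝ := 2 / |1 - α| with hCdef
  have hCst : 0 < Cst := div_pos two_pos habs
  set e' : ℝ := (1 - α) / 2 with he'
  have hbe : b * e' = 1 := by rw [hbdef, he']; field_simp
  clear_value b Cst e'
  let Φ₀ : ℝ → ℝ := fun s => ∫ x, (f x + s * ξ x) ^ b ∂lam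
  let Φ₁ : ℝ → ℝ := fun s => ∫ x, (f x + s * ξ x) ^ (b - 1) * ξ x ∂lam
  let Φ₂ : ℝ → ℝ := fun s => ∫ x, (f x + s * ξ x) ^ (b - 2) * (ξ x * ξ x) ∂lam
  have hApos : ∀ t ∈ I, 0 < Φ₀ (τ t) := fun t ht =>
    aux_integral_pos lam hlam
      ((hf.add (continuous_const.mul hξ)).rpow_const fun x => Or.inl (ne_of_gt (hpos t ht x)))
      fun x => Real.rpow_pos_of_pos (hpos t ht x) b
  have hΦ₀ : ∀ t ∈ I, HasDerivAt Φ₀ (b * Φ₁ (τ t)) (τ t) := by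
    intro t ht
    have h := aux_diff_under lam hf hξ continuous_const (w := fun _ => (1 : ℝ)) b (hpos t ht)
    have e1 : (fun s => ∫ x, (f x + s * ξ x) ^ b * 1 ∂lam) = Φ₀ := by
      funext s; simp [Φ₀]
    have e2 : (∫ x, (b * (f x + τ t * ξ x) ^ (b - 1) * ξ x) * 1 ∂lam) = b * Φ₁ (τ t) := by
      rw [← integral_const_mul]
      congr 1; funext x; ring
    rw [e1, e2] at h; exact h
  have hΦ₁ : ∀ t ∈ I, HasDerivAt Φ₁ ((b - 1) * Φ₂ (τ t)) (τ t) := by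
    intro t ht
    have h := aux_diff_under lam hf hξ hξ (b - 1) (hpos t ht)
    have e2 : (∫ x, ((b - 1) * (f x + τ t * ξ x) ^ (b - 1 - 1) * ξ x) * ξ x ∂lam)
        = (b - 1) * Φ₂ (τ t) := by
      rw [← integral_const_mul]
      congr 1; funext x
      have hbb : b - 1 - 1 = b - 2 := by ring
      rw [hbb]; ring
    rw [e2] at h; exact h
  let g : ℝ → ℝ := fun t => Φ₀ (τ t) ^ (-e')
  have hgpos : ∀ t ∈ I, 0 < g t := fun t ht => Real.rpow_pos_of_pos (hApos t ht) _
  have hγeq : ∀ t ∈ I, ∀ x, γ t x = Cst * ((f x + τ t * ξ x) * g t) := by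
    intro t ht x
    have hgt : g t = (∫ x', (f x' + τ t * ξ x') ^ b ∂lam) ^ (-e') := rfl
    rw [hγ, hgt, Real.rpow_neg (hApos t ht).le, div_eq_mul_inv, mul_assoc]
  have hA : ∀ t ∈ I, HasDerivWithinAt (fun s => Φ₀ (τ s)) (b * Φ₁ (τ t) * τ' t) I t :=
    fun t ht => (hΦ₀ t ht).comp_hasDerivWithinAt t (hd1 t ht)
  have hB : ∀ t ∈ I, HasDerivWithinAt (fun s => Φ₁ (τ s)) ((b - 1) * Φ₂ (τ t) * τ' t) I t :=
    fun t ht => (hΦ₁ t ht).comp_hasDerivWithinAt t (hd1 t ht)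
  let g1 : ℝ → ℝ := fun t => b * Φ₁ (τ t) * τ' t * -e' * Φ₀ (τ t) ^ (-e' - 1)
  have hg1 : ∀ t ∈ I, HasDerivWithinAt g (g1 t) I t := fun t ht =>
    (hA t ht).rpow_const (p := -e') (Or.inl (ne_of_gt (hApos t ht)))
  let g2 : ℝ → ℝ := fun t =>
    ((b * ((b - 1) * Φ₂ (τ t) * τ' t) * τ' t + b * Φ₁ (τ t) * τ'' t) * -e')
        * Φ₀ (τ t) ^ (-e' - 1)
      + (b * Φ₁ (τ t) * τ' t * -e')
        * (b * Φ₁ (τ t) * τ' t * (-e' - 1) * Φ₀ (τ t) ^ (-e' - 1 - 1))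
  have hg2 : ∀ t ∈ I, HasDerivWithinAt g1 (g2 t) I t := by
    intro t ht
    have hu : HasDerivWithinAt (fun s => b * Φ₁ (τ s) * τ' s * -e')
        ((b * ((b - 1) * Φ₂ (τ t) * τ' t) * τ' t + b * Φ₁ (τ t) * τ'' t) * -e') I t :=
      (((hB t ht).const_mul b).mul (hd2 t ht)).mul_const (-e')
    have hA1 : HasDerivWithinAt (fun s => Φ₀ (τ s) ^ (-e' - 1))
        (b * Φ₁ (τ t) * τ' t * (-e' - 1) * Φ₀ (τ t) ^ (-e' - 1 - 1)) I t :=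
      (hA t ht).rpow_const (p := -e' - 1) (Or.inl (ne_of_gt (hApos t ht)))
    exact hu.mul hA1
  have hkey : ∀ t ∈ I, τ'' t * g t + 2 * τ' t * g1 t = 0 := by
    intro t ht
    have hAne : Φ₀ (τ t) ≠ 0 := ne_of_gt (hApos t ht)
    have hode' : τ'' t = 2 * (Φ₁ (τ t) / Φ₀ (τ t)) * τ' t ^ 2 := hode t ht
    have hsub : Φ₀ (τ t) ^ (-e' - 1) = Φ₀ (τ t) ^ (-e') / Φ₀ (τ t) :=
      Real.rpow_sub_one hAne (-e')
    show τ'' t * Φ₀ (τ t) ^ (-e')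
        + 2 * τ' t * (b * Φ₁ (τ t) * τ' t * -e' * Φ₀ (τ t) ^ (-e' - 1)) = 0
    rw [hode', hsub]
    field_simp [hAne]
    linear_combination (-(2 * Φ₁ (τ t) * τ' t ^ 2 * Φ₀ (τ t) ^ (-e'))) * hbe
  constructor
  · intro t ht
    have hAt := hApos t ht
    have hA0 : (0 : ℝ) ≤ ∫ x', (f x' + τ t * ξ x') ^ b ∂lam := hAt.le
    have hAne : (∫ x', (f x' + τ t * ξ x') ^ b ∂lam) ≠ 0 := ne_of_gt hAt
    have hint : ∀ x, (γ t x) ^ b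
        = (Cst ^ b / ∫ x', (f x' + τ t * ξ x') ^ b ∂lam) * (f x + τ t * ξ x) ^ b := by
      intro x
      rw [hγ, Real.div_rpow (mul_nonneg hCst.le (hpos t ht x).le) (Real.rpow_nonneg hA0 e'),
        Real.mul_rpow hCst.le (hpos t ht x).le, ← Real.rpow_mul hA0]
      have h1 : e' * b = 1 := by rw [mul_comm]; exact hbe
      rw [h1, Real.rpow_one]
      ring
    calc ∫ x, (γ t x) ^ b ∂lam
        = ∫ x, (Cst ^ b / ∫ x', (f x' + τ t * ξ x') ^ b ∂lam) * (f x + τ t * ξ x) ^ b ∂lam :=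
          integral_congr_ae (Filter.Eventually.of_forall fun x => hint x)
      _ = (Cst ^ b / ∫ x', (f x' + τ t * ξ x') ^ b ∂lam) * ∫ x, (f x + τ t * ξ x) ^ b ∂lam :=
          integral_const_mul _ _
      _ = Cst ^ b := div_mul_cancel₀ _ hAne
  · refine ⟨fun t => g2 t / g t,
      fun t x => Cst * ((τ' t * ξ x) * g t + (f x + τ t * ξ x) * g1 t), ?_, ?_⟩
    · intro x t ht
      have hp' : HasDerivWithinAt (fun s => f x + τ s * ξ x) (τ' t * ξ x) I t := by
        simpa using ((hd1 t ht).mul_const (ξ x)).const_add (f x)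
      have hG := (hp'.mul (hg1 t ht)).const_mul Cst
      exact hG.congr (fun s hs => hγeq s hs x) (hγeq t ht x)
    · intro x t ht
      have hp' : HasDerivWithinAt (fun s => f x + τ s * ξ x) (τ' t * ξ x) I t := by
        simpa using ((hd1 t ht).mul_const (ξ x)).const_add (f x)
      have h1 : HasDerivWithinAt (fun s => τ' s * ξ x) (τ'' t * ξ x) I t :=
        (hd2 t ht).mul_const (ξ x)
      have hpart := ((h1.mul (hg1 t ht)).add (hp'.mul (hg2 t ht))).const_mul Cst
      refine hpart.congr_deriv (Eq.symm ?_)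
      rw [hγeq t ht x]
      have hgne : g t ≠ 0 := ne_of_gt (hgpos t ht)
      have hk := hkey t ht
      rw [div_mul_eq_mul_div, div_eq_iff hgne]
      linear_combination (-(Cst * ξ x * g t)) * hk
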